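/- arXiv:1605.01782 — 3 statements merged into one kernel-verified Lean document; each statement's English description precedes it below -/
import Mathlib

section
/- Let T > 0 and let f, g, G be nonnegative functions on [0,T] with f and g absolutely continuous. Suppose that f'(t) ≤ A√(G(t)) a.e., g'(t) + G(t) ≤ α(t)g(t) + β(t)f(t)² a.e., and f(0) = 0, where α, β are nonnegative with α ∈ L¹(0,T) and t↦t·β(t) ∈ L¹(0,T). Then for all t ∈ [0,T], g(t) + ∫₀ᵗ G(s) ds ≤ g(0)·exp(∫₀ᵗ (α(s) + A²s·β(s)) ds). -/
open MeasureTheory Set Filter Topology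

lemma aux_inv_le_exp {x d : ℝ} (hx : 0 ≤ x) (hxd : x ≤ d) (hd : d < 1) :
    (1 - x)⁻¹ ≤ Real.exp (x / (1 - d)) := by
  have h1 : 0 < 1 - x := by linarith
  have h2 : 0 < 1 - d := by linarith
  have hlog : Real.log ((1 - x)⁻¹) ≤ x / (1 - d) := by
    have h3 := Real.log_le_sub_one_of_pos (inv_pos.2 h1)
    have e1 : (1 - x)⁻¹ - 1 = x / (1 - x) := by field_simp; ring
    have e2 : x / (1 - x) ≤ x / (1 - d) := by
      apply div_le_div_of_nonneg_left hx h2; linarith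
    linarith [e1 ▸ h3]
  calc (1 - x)⁻¹ = Real.exp (Real.log ((1 - x)⁻¹)) := (Real.exp_log (inv_pos.2 h1)).symm
    _ ≤ Real.exp (x / (1 - d)) := Real.exp_le_exp.2 hlog

lemma gronwall_integral {T c : ℝ} (hT : 0 ≤ T) (hc : 0 ≤ c) (φ η : ℝ → ℝ)
    (hφ_int : IntegrableOn φ (Icc 0 T))
    (hφ0 : ∀ᵐ s ∂(volume.restrict (Icc (0:ℝ) T)), 0 ≤ φ s)
    (hη_cont : ContinuousOn η (Icc 0 T)) (hη0 : ∀ s ∈ Icc (0:ℝ) T, 0 ≤ η s)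
    (hineq : ∀ t ∈ Icc (0:ℝ) T, η t ≤ c + ∫ s in (0:ℝ)..t, φ s * η s) :
    ∀ t ∈ Icc (0:ℝ) T, η t ≤ c * Real.exp (∫ s in (0:ℝ)..t, φ s) := by
  obtain ⟨M, hM⟩ := (isCompact_Icc : IsCompact (Icc (0:ℝ) T)).exists_bound_of_continuousOn hη_cont
  have hφη_meas : AEStronglyMeasurable (fun s => φ s * η s) (volume.restrict (Icc (0:ℝ) T)) :=
    hφ_int.aestronglyMeasurable.mul (hη_cont.aestronglyMeasurable measurableSet_Icc)
  have hφη_int : IntegrableOn (fun s => φ s * η s) (Icc 0 T) := by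
    refine Integrable.mono' (hφ_int.abs.mul_const M) hφη_meas ?_
    filter_upwards [ae_restrict_mem measurableSet_Icc] with s hs
    calc ‖φ s * η s‖ = |φ s| * ‖η s‖ := by rw [norm_mul]; rfl
      _ ≤ |φ s| * M := mul_le_mul_of_nonneg_left (hM s hs) (abs_nonneg _)
  have hIφ : ∀ a b : ℝ, 0 ≤ a → a ≤ b → b ≤ T → IntervalIntegrable φ volume a b := by
    intro a b ha hab hb
    apply (hφ_int.mono_set _).intervalIntegrable
    rw [uIcc_of_le hab]; exact Icc_subset_Icc ha hb
  have hIφη : ∀ a b : ℝ, 0 ≤ a → a ≤ b → b ≤ T →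
      IntervalIntegrable (fun s => φ s * η s) volume a b := by
    intro a b ha hab hb
    apply (hφη_int.mono_set _).intervalIntegrable
    rw [uIcc_of_le hab]; exact Icc_subset_Icc ha hb
  have hφη0 : ∀ᵐ s ∂(volume.restrict (Icc (0:ℝ) T)), 0 ≤ φ s * η s := by
    filter_upwards [hφ0, ae_restrict_mem measurableSet_Icc] with s h1 h2
    exact mul_nonneg h1 (hη0 s h2)
  set F : ℝ → ℝ := fun s => ∫ u in (0:ℝ)..s, φ u with hF
  have hFcont : ContinuousOn F (Icc 0 T) := by
    have h := intervalIntegral.continuousOn_primitive_interval (a := 0) (b := T) (μ := volume)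
      (f := φ) (by rwa [uIcc_of_le hT])
    rwa [uIcc_of_le hT] at h
  have hFadd : ∀ a b : ℝ, 0 ≤ a → a ≤ b → b ≤ T → F b = F a + ∫ u in a..b, φ u := by
    intro a b ha hab hb
    rw [hF]
    exact (intervalIntegral.integral_add_adjacent_intervals
      (hIφ 0 a le_rfl ha (hab.trans hb)) (hIφ a b ha hab hb)).symm
  have hFmono : ∀ a b : ℝ, 0 ≤ a → a ≤ b → b ≤ T → F a ≤ F b := by
    intro a b ha hab hb
    rw [hFadd a b ha hab hb]
    have h0 : 0 ≤ ∫ u in a..b, φ u := by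
      apply intervalIntegral.integral_nonneg_of_ae_restrict hab
      exact ae_restrict_of_ae_restrict_of_subset (Icc_subset_Icc ha hb) hφ0
    linarith
  have hF0 : F 0 = 0 := intervalIntegral.integral_same
  intro t ht
  obtain ⟨ht0, htT⟩ := ht
  have K : ∀ δ : ℝ, 0 < δ → δ < 1 → η t ≤ c * Real.exp (F t / (1 - δ)) := by
    intro δ hδ0 hδ1
    have hUC := (isCompact_Icc : IsCompact (Icc (0:ℝ) T)).uniformContinuousOn_of_continuous hFcont
    rw [Metric.uniformContinuousOn_iff] at hUC
    obtain ⟨ρ, hρ0, hρ⟩ := hUC δ hδ0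
    obtain ⟨n0, hn0⟩ := exists_nat_gt (t / ρ)
    set n : ℕ := n0 + 1 with hn
    have hn_pos : 0 < (n:ℝ) := by positivity
    have hstep : t / n < ρ := by
      rw [div_lt_iff₀ hn_pos]
      have h1 : t / ρ < (n:ℝ) := lt_of_lt_of_le hn0 (by exact_mod_cast Nat.le_succ n0)
      calc t = (t / ρ) * ρ := by field_simp
        _ < (n:ℝ) * ρ := by exact mul_lt_mul_of_pos_right h1 hρ0
        _ = ρ * n := mul_comm _ _
    set p : ℕ → ℝ := fun i => (i : ℝ) * t / n with hp
    have hp0 : p 0 = 0 := by simp [hp]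
    have hpn : p n = t := by simp only [hp]; field_simp [hn_pos.ne']
    have hpmono : ∀ i j : ℕ, i ≤ j → p i ≤ p j := by
      intro i j hij
      have hij' : (i:ℝ) ≤ (j:ℝ) := by exact_mod_cast hij
      simp only [hp]
      gcongr
    have hple : ∀ i : ℕ, i ≤ n → p i ≤ t := by
      intro i hi
      have := hpmono i n hi
      rwa [hpn] at this
    have hpnn : ∀ i : ℕ, 0 ≤ p i := by
      intro i; apply div_nonneg _ hn_pos.le; positivity
    have hpmem : ∀ i : ℕ, i ≤ n → p i ∈ Icc (0:ℝ) T := fun i hi =>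
      ⟨hpnn i, (hple i hi).trans htT⟩
    have hpdiff : ∀ i : ℕ, p (i+1) - p i = t / n := by
      intro i
      rw [hp]
      push_cast
      ring
    set C : ℕ → ℝ := fun i => c + ∫ s in (0:ℝ)..(p i), φ s * η s with hC
    have hCd : ∀ i : ℕ, C i = c + ∫ s in (0:ℝ)..(p i), φ s * η s := fun i => rfl
    have hdag : ∀ i : ℕ, i ≤ n → ∀ s ∈ Icc (0:ℝ) (p i), η s ≤ C i := by
      intro i hi s hs
      have hsT : s ∈ Icc (0:ℝ) T := ⟨hs.1, hs.2.trans ((hple i hi).trans htT)⟩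
      calc η s ≤ c + ∫ u in (0:ℝ)..s, φ u * η u := hineq s hsT
        _ ≤ C i := by
            rw [hCd i]
            have hmono := intervalIntegral.integral_mono_interval (le_refl (0:ℝ)) hs.1 hs.2
              (ae_restrict_of_ae_restrict_of_subset (Ioc_subset_Icc_self.trans
                (Icc_subset_Icc le_rfl ((hple i hi).trans htT))) hφη0)
              (hIφη 0 (p i) le_rfl (hpnn i) ((hple i hi).trans htT))
            linarith
    have hd : ∀ i : ℕ, i < n → 0 ≤ F (p (i+1)) - F (p i) ∧ F (p (i+1)) - F (p i) ≤ δ := by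
      intro i hi
      have hi1 : i + 1 ≤ n := hi
      have hmem1 := hpmem i (le_of_lt hi)
      have hmem2 := hpmem (i+1) hi1
      constructor
      · have := hFmono (p i) (p (i+1)) (hpnn i) (hpmono i (i+1) (Nat.le_succ i)) hmem2.2
        linarith
      · have hdist : dist (p (i+1)) (p i) < ρ := by
          rw [Real.dist_eq, hpdiff i, abs_of_nonneg (div_nonneg ht0 hn_pos.le)]
          exact hstep
        have := hρ (p (i+1)) hmem2 (p i) hmem1 hdist
        rw [Real.dist_eq] at this
        have := le_of_lt (lt_of_le_of_lt (le_abs_self _) this)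
        linarith
    have hCge : ∀ i : ℕ, i ≤ n → c ≤ C i := by
      intro i hi
      rw [hCd i]
      have h0 : 0 ≤ ∫ s in (0:ℝ)..(p i), φ s * η s := by
        apply intervalIntegral.integral_nonneg_of_ae_restrict (hpnn i)
        exact ae_restrict_of_ae_restrict_of_subset (Icc_subset_Icc le_rfl ((hple i hi).trans htT)) hφη0
      linarith
    have hrec : ∀ i : ℕ, i < n → C (i+1) ≤ C i + C (i+1) * (F (p (i+1)) - F (p i)) := by
      intro i hi
      have hi1 : i + 1 ≤ n := hi
      have hple1 : p (i+1) ≤ T := (hple (i+1) hi1).trans htT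
      have hpleT : p i ≤ T := (hple i (le_of_lt hi)).trans htT
      have hij : p i ≤ p (i+1) := hpmono i (i+1) (Nat.le_succ i)
      have hsplit : C (i+1) = C i + ∫ s in (p i)..(p (i+1)), φ s * η s := by
        rw [hCd (i+1), hCd i]
        have := intervalIntegral.integral_add_adjacent_intervals
          (hIφη 0 (p i) le_rfl (hpnn i) hpleT) (hIφη (p i) (p (i+1)) (hpnn i) hij hple1)
        rw [← this]; ring
      have hbound : (∫ s in (p i)..(p (i+1)), φ s * η s) ≤ C (i+1) * (F (p (i+1)) - F (p i)) := by
        have hmono : (∫ s in (p i)..(p (i+1)), φ s * η s) ≤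
            ∫ s in (p i)..(p (i+1)), φ s * C (i+1) := by
          apply intervalIntegral.integral_mono_ae_restrict hij
            (hIφη (p i) (p (i+1)) (hpnn i) hij hple1)
            ((hIφ (p i) (p (i+1)) (hpnn i) hij hple1).mul_const _)
          filter_upwards [ae_restrict_of_ae_restrict_of_subset (Icc_subset_Icc (hpnn i) hple1) hφ0,
            ae_restrict_mem measurableSet_Icc] with s h1 h2
          have hsI : s ∈ Icc (0:ℝ) (p (i+1)) := ⟨(hpnn i).trans h2.1, h2.2⟩
          exact mul_le_mul_of_nonneg_left (hdag (i+1) hi1 s hsI) h1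
        have heq : (∫ s in (p i)..(p (i+1)), φ s * C (i+1)) = C (i+1) * (F (p (i+1)) - F (p i)) := by
          rw [intervalIntegral.integral_mul_const]
          rw [hFadd (p i) (p (i+1)) (hpnn i) hij hple1]
          ring
        linarith
      linarith [hsplit, hbound]
    have hCi : ∀ i : ℕ, i ≤ n → C i ≤ c * Real.exp (F (p i) / (1 - δ)) := by
      intro i
      induction i with
      | zero =>
        intro _
        have hc0 : C 0 = c := by rw [hCd 0, hp0, intervalIntegral.integral_same, add_zero]
        rw [hc0, hp0, hF0]
        simp
      | succ i ih =>
        intro hi1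
        have hi : i < n := hi1
        obtain ⟨hd0, hdδ⟩ := hd i hi
        have h1d : 0 < 1 - (F (p (i+1)) - F (p i)) := by linarith
        have hrc := hrec i hi
        have hCi0 : 0 ≤ C i := le_trans hc (hCge i (le_of_lt hi))
        have hstep1 : C (i+1) * (1 - (F (p (i+1)) - F (p i))) ≤ C i := by nlinarith [hrc]
        have hstep2 : C (i+1) ≤ C i * (1 - (F (p (i+1)) - F (p i)))⁻¹ := by
          rw [← div_eq_mul_inv, le_div_iff₀ h1d]
          exact hstep1
        have hstep3 : C (i+1) ≤ C i * Real.exp ((F (p (i+1)) - F (p i)) / (1 - δ)) :=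
          hstep2.trans (mul_le_mul_of_nonneg_left (aux_inv_le_exp hd0 hdδ hδ1) hCi0)
        have hexp : Real.exp (F (p i) / (1 - δ)) * Real.exp ((F (p (i+1)) - F (p i)) / (1 - δ)) =
            Real.exp (F (p (i+1)) / (1 - δ)) := by
          rw [← Real.exp_add, ← add_div]
          ring_nf
        calc C (i+1) ≤ C i * Real.exp ((F (p (i+1)) - F (p i)) / (1 - δ)) := hstep3
          _ ≤ c * Real.exp (F (p i) / (1 - δ)) * Real.exp ((F (p (i+1)) - F (p i)) / (1 - δ)) := by
              apply mul_le_mul_of_nonneg_right (ih (le_of_lt hi)) (Real.exp_nonneg _)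
          _ = c * Real.exp (F (p (i+1)) / (1 - δ)) := by rw [mul_assoc, hexp]
    have hfin := hdag n le_rfl t ⟨ht0, le_of_eq hpn.symm⟩
    have := hCi n le_rfl
    rw [hpn] at this
    exact hfin.trans this
  have H : ∀ r : ℝ, F t < r → η t ≤ c * Real.exp r := by
    intro r hr
    have hFt0 : 0 ≤ F t := by
      have := hFmono 0 t le_rfl ht0 htT
      rwa [hF0] at this
    have hr0 : 0 < r := lt_of_le_of_lt hFt0 hr
    set δ : ℝ := min (1/2) (1 - F t / r) with hδ
    have hδ0 : 0 < δ := lt_min (by norm_num) (by rw [sub_pos, div_lt_one hr0]; exact hr)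
    have hδ1 : δ < 1 := lt_of_le_of_lt (min_le_left _ _) (by norm_num)
    have hK := K δ hδ0 hδ1
    have hfr : F t / (1 - δ) ≤ r := by
      have h1 : δ ≤ 1 - F t / r := min_le_right _ _
      have h2 : 0 < 1 - δ := by linarith
      rw [div_le_iff₀ h2]
      calc F t = (F t / r) * r := by field_simp
        _ ≤ (1 - δ) * r := mul_le_mul_of_nonneg_right (by linarith) hr0.le
        _ = r * (1 - δ) := mul_comm _ _
    exact hK.trans (mul_le_mul_of_nonneg_left (Real.exp_le_exp.2 hfr) hc)
  refine ge_of_tendsto (f := fun r => c * Real.exp r) (x := 𝓝[>] (F t)) ?_ ?_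
  · exact ((Real.continuous_exp.tendsto _).const_mul c).mono_left nhdsWithin_le_nhds
  · filter_upwards [self_mem_nhdsWithin] with r hr
    exact H r hr

lemma cauchy_schwarz_sqrt {s : ℝ} (hs : 0 ≤ s) {G : ℝ → ℝ}
    (hG_int : IntegrableOn G (Ioc 0 s))
    (hG0 : ∀ᵐ u ∂(volume.restrict (Ioc (0:ℝ) s)), 0 ≤ G u) :
    (∫ u in Ioc (0:ℝ) s, Real.sqrt (G u)) ≤
      Real.sqrt s * Real.sqrt (∫ u in Ioc (0:ℝ) s, G u) := by
  set μ := volume.restrict (Ioc (0:ℝ) s) with hμ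
  haveI : IsFiniteMeasure μ := ⟨by rw [hμ, Measure.restrict_apply_univ]; exact measure_Ioc_lt_top⟩
  have hmeas : AEStronglyMeasurable (fun u => Real.sqrt (G u)) μ :=
    Real.continuous_sqrt.comp_aestronglyMeasurable hG_int.aestronglyMeasurable
  have hpq : Real.HolderConjugate 2 2 := Real.HolderConjugate.two_two
  have hsq_int : Integrable (fun u => Real.sqrt (G u) ^ 2) μ := by
    apply hG_int.congr
    filter_upwards [hG0] with u hu
    rw [Real.sq_sqrt hu]
  have hof2 : ENNReal.ofReal (2:ℝ) = 2 := by
    rw [ENNReal.ofReal_ofNat]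
  have hmem : MemLp (fun u => Real.sqrt (G u)) (ENNReal.ofReal 2) μ := by
    rw [hof2]
    exact (memLp_two_iff_integrable_sq hmeas).2 hsq_int
  have hmem1 : MemLp (fun _ : ℝ => (1:ℝ)) (ENNReal.ofReal 2) μ := memLp_const 1
  have h := integral_mul_le_Lp_mul_Lq_of_nonneg hpq
    (f := fun u => Real.sqrt (G u)) (g := fun _ => (1:ℝ)) (μ := μ)
    (ae_of_all _ fun u => Real.sqrt_nonneg _) (ae_of_all _ fun _ => zero_le_one) hmem hmem1
  simp only [mul_one] at h
  have hr2 : ∀ x : ℝ, x ^ (2:ℝ) = x ^ (2:ℕ) := fun x => by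
    rw [show (2:ℝ) = ((2:ℕ):ℝ) by norm_num, Real.rpow_natCast]
  have e1 : (∫ a, Real.sqrt (G a) ^ (2:ℝ) ∂μ) = ∫ u in Ioc (0:ℝ) s, G u := by
    rw [hμ]
    apply integral_congr_ae
    filter_upwards [hG0] with u hu
    rw [hr2, Real.sq_sqrt hu]
  have e2 : (∫ _ : ℝ, (1:ℝ) ^ (2:ℝ) ∂μ) = s := by
    simp only [Real.one_rpow]
    rw [integral_const, smul_eq_mul, mul_one, hμ, measureReal_def, Measure.restrict_apply_univ,
      Real.volume_Ioc, sub_zero, ENNReal.toReal_ofReal hs]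
  rw [e1, e2] at h
  have hI0 : 0 ≤ ∫ u in Ioc (0:ℝ) s, G u :=
    integral_nonneg_of_ae hG0
  calc (∫ u in Ioc (0:ℝ) s, Real.sqrt (G u)) = ∫ a, Real.sqrt (G a) ∂μ := by rw [hμ]
    _ ≤ (∫ u in Ioc (0:ℝ) s, G u) ^ (1/(2:ℝ)) * s ^ (1/(2:ℝ)) := h
    _ = Real.sqrt s * Real.sqrt (∫ u in Ioc (0:ℝ) s, G u) := by
        rw [← Real.sqrt_eq_rpow, ← Real.sqrt_eq_rpow, mul_comm]

/-- Lemma 2.5 (Gronwall-type inequality), estimate for `g`. -/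
theorem gronwall_type_g (T A : ℝ) (hT : 0 < T) (hA : 0 ≤ A)
    (f g G α β f' g' : ℝ → ℝ)
    (hf_nonneg : ∀ t ∈ Icc (0:ℝ) T, 0 ≤ f t)
    (hg_nonneg : ∀ t ∈ Icc (0:ℝ) T, 0 ≤ g t)
    (hG_nonneg : ∀ t ∈ Icc (0:ℝ) T, 0 ≤ G t)
    (hα_nonneg : ∀ t ∈ Icc (0:ℝ) T, 0 ≤ α t)
    (hβ_nonneg : ∀ t ∈ Icc (0:ℝ) T, 0 ≤ β t)
    (hf'_int : IntegrableOn f' (Icc 0 T))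
    (hg'_int : IntegrableOn g' (Icc 0 T))
    (hG_int : IntegrableOn G (Icc 0 T))
    (hα_int : IntegrableOn α (Icc 0 T))
    (hβ_int : IntegrableOn (fun t => t * β t) (Icc 0 T))
    (hf_ftc : ∀ t ∈ Icc (0:ℝ) T, f t = f 0 + ∫ s in (0:ℝ)..t, f' s)
    (hg_ftc : ∀ t ∈ Icc (0:ℝ) T, g t = g 0 + ∫ s in (0:ℝ)..t, g' s)
    (hf0 : f 0 = 0)
    (h1 : ∀ᵐ t ∂(volume.restrict (Ioo 0 T)), f' t ≤ A * Real.sqrt (G t))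
    (h2 : ∀ᵐ t ∂(volume.restrict (Ioo 0 T)),
      g' t + G t ≤ α t * g t + β t * (f t) ^ 2) :
    ∀ t ∈ Icc (0:ℝ) T,
      g t + ∫ s in (0:ℝ)..t, G s ≤
        g 0 * Real.exp (∫ s in (0:ℝ)..t, (α s + A ^ 2 * s * β s)) := by
  -- helper for interval integrability
  have mkII : ∀ {F : ℝ → ℝ}, IntegrableOn F (Icc 0 T) → ∀ a b : ℝ, 0 ≤ a → a ≤ b → b ≤ T →
      IntervalIntegrable F volume a b := by
    intro F hF a b ha hab hb
    apply (hF.mono_set _).intervalIntegrable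
    rw [uIcc_of_le hab]
    exact Icc_subset_Icc ha hb
  have hG_ae : ∀ᵐ s ∂(volume.restrict (Icc (0:ℝ) T)), 0 ≤ G s := by
    filter_upwards [ae_restrict_mem measurableSet_Icc] with s hs using hG_nonneg s hs
  -- nonnegativity of the partial integral of G
  have hIG0 : ∀ s ∈ Icc (0:ℝ) T, 0 ≤ ∫ u in (0:ℝ)..s, G u := by
    intro s hs
    apply intervalIntegral.integral_nonneg_of_ae_restrict hs.1
    exact ae_restrict_of_ae_restrict_of_subset (Icc_subset_Icc le_rfl hs.2) hG_ae
  -- a.e. avoidance of single points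
  have hne : ∀ c : ℝ, ∀ᵐ u : ℝ ∂volume, u ≠ c := by
    intro c
    have h : {u : ℝ | ¬ u ≠ c} = {c} := by ext u; simp
    rw [ae_iff, h]
    exact measure_singleton c
  have h1' : ∀ᵐ u : ℝ ∂volume, u ∈ Ioo (0:ℝ) T → f' u ≤ A * Real.sqrt (G u) :=
    (ae_restrict_iff' measurableSet_Ioo).1 h1
  have h2' : ∀ᵐ u : ℝ ∂volume, u ∈ Ioo (0:ℝ) T →
      g' u + G u ≤ α u * g u + β u * (f u) ^ 2 :=
    (ae_restrict_iff' measurableSet_Ioo).1 h2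
  -- integrability of sqrt G
  have hsqrt_meas : AEStronglyMeasurable (fun u => Real.sqrt (G u))
      (volume.restrict (Icc (0:ℝ) T)) :=
    Real.continuous_sqrt.comp_aestronglyMeasurable hG_int.aestronglyMeasurable
  have hsqrtG_int : IntegrableOn (fun u => Real.sqrt (G u)) (Icc 0 T) := by
    refine Integrable.mono' (g := fun u => 1 + |G u|) ?_ hsqrt_meas ?_
    · have h1c : IntegrableOn (fun _ : ℝ => (1:ℝ)) (Icc 0 T) :=
        integrableOn_const measure_Icc_lt_top.ne
      exact h1c.add hG_int.abs
    filter_upwards with u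
    rw [Real.norm_eq_abs, abs_of_nonneg (Real.sqrt_nonneg _)]
    by_cases hx : 0 ≤ G u
    · nlinarith [Real.sq_sqrt hx, Real.sqrt_nonneg (G u), le_abs_self (G u), abs_nonneg (G u)]
    · rw [Real.sqrt_eq_zero_of_nonpos (le_of_not_ge hx)]
      positivity
  -- the key pointwise bound on f^2
  have hfsq : ∀ s ∈ Icc (0:ℝ) T, f s ^ 2 ≤ A ^ 2 * s * ∫ u in (0:ℝ)..s, G u := by
    intro s hs
    have hs0 := hs.1
    have hsT := hs.2
    have hmono_ae : f' ≤ᵐ[volume.restrict (Icc (0:ℝ) s)] fun u => A * Real.sqrt (G u) := by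
      filter_upwards [ae_restrict_mem measurableSet_Icc, ae_restrict_of_ae h1',
        ae_restrict_of_ae (hne T), ae_restrict_of_ae (hne 0)] with u hu hImp huT hu0
      exact hImp ⟨lt_of_le_of_ne hu.1 (Ne.symm hu0), lt_of_le_of_ne (hu.2.trans hsT) huT⟩
    have hfs : f s = ∫ u in (0:ℝ)..s, f' u := by rw [hf_ftc s hs, hf0, zero_add]
    have hfle1 : f s ≤ ∫ u in (0:ℝ)..s, A * Real.sqrt (G u) := by
      rw [hfs]
      exact intervalIntegral.integral_mono_ae_restrict hs0
        (mkII hf'_int 0 s le_rfl hs0 hsT)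
        ((mkII hsqrtG_int 0 s le_rfl hs0 hsT).const_mul A) hmono_ae
    have hG0s : ∀ᵐ u ∂(volume.restrict (Ioc (0:ℝ) s)), 0 ≤ G u :=
      ae_restrict_of_ae_restrict_of_subset
        ((Ioc_subset_Icc_self).trans (Icc_subset_Icc le_rfl hsT)) hG_ae
    have hCS := cauchy_schwarz_sqrt hs0 (hG_int.mono_set
      ((Ioc_subset_Icc_self).trans (Icc_subset_Icc le_rfl hsT))) hG0s
    have heq1 : (∫ u in (0:ℝ)..s, Real.sqrt (G u)) = ∫ u in Ioc (0:ℝ) s, Real.sqrt (G u) :=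
      intervalIntegral.integral_of_le hs0
    have heq2 : (∫ u in (0:ℝ)..s, G u) = ∫ u in Ioc (0:ℝ) s, G u :=
      intervalIntegral.integral_of_le hs0
    have hfle : f s ≤ A * (Real.sqrt s * Real.sqrt (∫ u in (0:ℝ)..s, G u)) := by
      calc f s ≤ ∫ u in (0:ℝ)..s, A * Real.sqrt (G u) := hfle1
        _ = A * ∫ u in (0:ℝ)..s, Real.sqrt (G u) := intervalIntegral.integral_const_mul A _
        _ ≤ A * (Real.sqrt s * Real.sqrt (∫ u in (0:ℝ)..s, G u)) := by
            apply mul_le_mul_of_nonneg_left _ hA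
            rw [heq1, heq2]
            exact hCS
    have hsq := pow_le_pow_left₀ (hf_nonneg s hs) hfle 2
    have hI0 : 0 ≤ ∫ u in (0:ℝ)..s, G u := hIG0 s hs
    calc f s ^ 2 ≤ (A * (Real.sqrt s * Real.sqrt (∫ u in (0:ℝ)..s, G u))) ^ 2 := hsq
      _ = A ^ 2 * (Real.sqrt s ^ 2 * Real.sqrt (∫ u in (0:ℝ)..s, G u) ^ 2) := by ring
      _ = A ^ 2 * s * ∫ u in (0:ℝ)..s, G u := by
          rw [Real.sq_sqrt hs0, Real.sq_sqrt hI0]; ring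
  -- integrability of φ
  have hφ_int : IntegrableOn (fun s => α s + A ^ 2 * s * β s) (Icc 0 T) := by
    have h1i : IntegrableOn (fun s => A ^ 2 * (s * β s)) (Icc 0 T) := hβ_int.const_mul _
    have hfe : (fun s => α s + A ^ 2 * s * β s) = fun s => α s + A ^ 2 * (s * β s) := by
      funext s; ring
    rw [hfe]
    exact hα_int.add h1i
  have hφ0 : ∀ᵐ s ∂(volume.restrict (Icc (0:ℝ) T)), 0 ≤ α s + A ^ 2 * s * β s := by
    filter_upwards [ae_restrict_mem measurableSet_Icc] with s hs
    exact add_nonneg (hα_nonneg s hs)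
      (mul_nonneg (mul_nonneg (sq_nonneg A) hs.1) (hβ_nonneg s hs))
  -- continuity of η
  have hgc : ContinuousOn g (Icc (0:ℝ) T) := by
    have hprim : ContinuousOn (fun s => g 0 + ∫ u in (0:ℝ)..s, g' u) (Icc 0 T) := by
      apply continuousOn_const.add
      have h := intervalIntegral.continuousOn_primitive_interval (a := 0) (b := T) (μ := volume)
        (f := g') (by rwa [uIcc_of_le hT.le])
      rwa [uIcc_of_le hT.le] at h
    exact ContinuousOn.congr hprim (fun s hs => hg_ftc s hs)
  have hGc : ContinuousOn (fun s => ∫ u in (0:ℝ)..s, G u) (Icc (0:ℝ) T) := by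
    have h := intervalIntegral.continuousOn_primitive_interval (a := 0) (b := T) (μ := volume)
      (f := G) (by rwa [uIcc_of_le hT.le])
    rwa [uIcc_of_le hT.le] at h
  have hη_cont : ContinuousOn (fun s => g s + ∫ u in (0:ℝ)..s, G u) (Icc (0:ℝ) T) :=
    hgc.add hGc
  have hη0 : ∀ s ∈ Icc (0:ℝ) T, 0 ≤ g s + ∫ u in (0:ℝ)..s, G u := fun s hs =>
    add_nonneg (hg_nonneg s hs) (hIG0 s hs)
  -- integrability of φ * η
  obtain ⟨M, hM⟩ := (isCompact_Icc : IsCompact (Icc (0:ℝ) T)).exists_bound_of_continuousOn hη_cont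
  have hφη_meas : AEStronglyMeasurable
      (fun s => (α s + A ^ 2 * s * β s) * (g s + ∫ u in (0:ℝ)..s, G u))
      (volume.restrict (Icc (0:ℝ) T)) :=
    hφ_int.aestronglyMeasurable.mul (hη_cont.aestronglyMeasurable measurableSet_Icc)
  have hφη_int : IntegrableOn
      (fun s => (α s + A ^ 2 * s * β s) * (g s + ∫ u in (0:ℝ)..s, G u)) (Icc 0 T) := by
    refine Integrable.mono' (hφ_int.abs.mul_const M) hφη_meas ?_
    filter_upwards [ae_restrict_mem measurableSet_Icc] with s hs
    calc ‖(α s + A ^ 2 * s * β s) * (g s + ∫ u in (0:ℝ)..s, G u)‖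
        = |α s + A ^ 2 * s * β s| * ‖g s + ∫ u in (0:ℝ)..s, G u‖ := by rw [norm_mul]; rfl
      _ ≤ |α s + A ^ 2 * s * β s| * M := mul_le_mul_of_nonneg_left (hM s hs) (abs_nonneg _)
  -- the integral inequality
  have hineq : ∀ t ∈ Icc (0:ℝ) T, (g t + ∫ u in (0:ℝ)..t, G u) ≤
      g 0 + ∫ s in (0:ℝ)..t,
        ((α s + A ^ 2 * s * β s) * (g s + ∫ u in (0:ℝ)..s, G u)) := by
    intro t ht
    have hadd : (∫ u in (0:ℝ)..t, g' u) + (∫ u in (0:ℝ)..t, G u)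
        = ∫ u in (0:ℝ)..t, (g' u + G u) :=
      (intervalIntegral.integral_add (mkII hg'_int 0 t le_rfl ht.1 ht.2)
        (mkII hG_int 0 t le_rfl ht.1 ht.2)).symm
    have hmono : (∫ u in (0:ℝ)..t, (g' u + G u)) ≤ ∫ s in (0:ℝ)..t,
        ((α s + A ^ 2 * s * β s) * (g s + ∫ u in (0:ℝ)..s, G u)) := by
      apply intervalIntegral.integral_mono_ae_restrict ht.1
        ((mkII hg'_int 0 t le_rfl ht.1 ht.2).add (mkII hG_int 0 t le_rfl ht.1 ht.2))
        (mkII hφη_int 0 t le_rfl ht.1 ht.2)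
      filter_upwards [ae_restrict_mem measurableSet_Icc, ae_restrict_of_ae h2',
        ae_restrict_of_ae (hne T), ae_restrict_of_ae (hne 0)] with u hu h2u huT hu0
      have huT' : u ∈ Icc (0:ℝ) T := ⟨hu.1, hu.2.trans ht.2⟩
      have hkey := h2u ⟨lt_of_le_of_ne hu.1 (Ne.symm hu0),
        lt_of_le_of_ne (hu.2.trans ht.2) huT⟩
      have hfu := hfsq u huT'
      have hIGu : 0 ≤ ∫ v in (0:ℝ)..u, G v := hIG0 u huT'
      have hgu : 0 ≤ g u := hg_nonneg u huT'
      have h5 : α u * g u ≤ α u * (g u + ∫ v in (0:ℝ)..u, G v) :=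
        mul_le_mul_of_nonneg_left (by linarith) (hα_nonneg u huT')
      have h6 : β u * f u ^ 2 ≤ β u * (A ^ 2 * u * ∫ v in (0:ℝ)..u, G v) :=
        mul_le_mul_of_nonneg_left hfu (hβ_nonneg u huT')
      have hnn : 0 ≤ A ^ 2 * u * β u :=
        mul_nonneg (mul_nonneg (sq_nonneg A) hu.1) (hβ_nonneg u huT')
      have h7 : β u * (A ^ 2 * u * ∫ v in (0:ℝ)..u, G v) ≤
          A ^ 2 * u * β u * (g u + ∫ v in (0:ℝ)..u, G v) := by
        have he : β u * (A ^ 2 * u * ∫ v in (0:ℝ)..u, G v)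
            = A ^ 2 * u * β u * (∫ v in (0:ℝ)..u, G v) := by ring
        rw [he]
        exact mul_le_mul_of_nonneg_left (by linarith) hnn
      have hexpand : (α u + A ^ 2 * u * β u) * (g u + ∫ v in (0:ℝ)..u, G v)
          = α u * (g u + ∫ v in (0:ℝ)..u, G v)
            + A ^ 2 * u * β u * (g u + ∫ v in (0:ℝ)..u, G v) := by ring
      rw [hexpand]
      linarith
    rw [hg_ftc t ht]
    linarith [hadd, hmono]
  have key := gronwall_integral (T := T) (c := g 0) hT.le
    (hg_nonneg 0 ⟨le_rfl, hT.le⟩)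
    (fun s => α s + A ^ 2 * s * β s) (fun s => g s + ∫ u in (0:ℝ)..s, G u)
    hφ_int hφ0 hη_cont hη0 hineq
  intro t ht
  exact key t ht
end

section
/- Let T > 0, A ≥ 0, and let f, g, G be nonnegative functions on [0,T] with f, g absolutely continuous, satisfying f'(t) ≤ A√(G(t)), g'(t) + G(t) ≤ α(t)g(t) + β(t)f(t)² a.e. on (0,T), and f(0) = 0, with α ∈ L¹(0,T) and t·β(t) ∈ L¹(0,T) nonnegative. Then f(t) ≤ A√(g(0))·√t·exp((1/2)∫₀ᵗ (α(s) + A²s·β(s)) ds) for all t ∈ [0,T]. -/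
open MeasureTheory Set Filter

lemma ii_sub {F : ℝ → ℝ} {c d a b : ℝ} (hF : IntegrableOn F (Icc c d))
    (ha : a ∈ Icc c d) (hb : b ∈ Icc c d) : IntervalIntegrable F volume a b := by
  rw [intervalIntegrable_iff]
  exact hF.mono_set (Set.uIoc_subset_uIcc.trans (Set.uIcc_subset_Icc ha hb))

lemma sqrt_intOn {G : ℝ → ℝ} {a b : ℝ} (h : IntegrableOn G (Icc a b)) :
    IntegrableOn (fun u => Real.sqrt (G u)) (Icc a b) := by
  refine Integrable.mono' ((integrableOn_const (C := (1:ℝ)) measure_Icc_lt_top.ne).add h.norm)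
    (Real.continuous_sqrt.comp_aestronglyMeasurable h.aestronglyMeasurable) ?_
  filter_upwards with u
  rw [Real.norm_of_nonneg (Real.sqrt_nonneg _)]
  have h1 : Real.sqrt (G u) ≤ Real.sqrt ((1 + ‖G u‖) ^ 2) := by
    apply Real.sqrt_le_sqrt
    have := le_abs_self (G u)
    have := norm_nonneg (G u)
    rw [Real.norm_eq_abs] at *
    nlinarith
  rwa [Real.sqrt_sq (by positivity)] at h1

lemma cs_sqrt {s : ℝ} (hs : 0 ≤ s) {G : ℝ → ℝ} (hGi : IntegrableOn G (Icc 0 s))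
    (hG0 : ∀ u ∈ Icc (0:ℝ) s, 0 ≤ G u) :
    ∫ u in (0:ℝ)..s, Real.sqrt (G u) ≤ Real.sqrt s * Real.sqrt (∫ u in (0:ℝ)..s, G u) := by
  rcases eq_or_lt_of_le hs with rfl | hs'
  · simp
  set J := ∫ u in (0:ℝ)..s, Real.sqrt (G u) with hJ
  set K := ∫ u in (0:ℝ)..s, G u with hK
  set c := J / s with hc
  have hGii : IntervalIntegrable G volume 0 s := ii_sub hGi ⟨le_refl 0, hs⟩ ⟨hs, le_refl s⟩
  have hsqii : IntervalIntegrable (fun u => Real.sqrt (G u)) volume 0 s :=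
    ii_sub (sqrt_intOn hGi) ⟨le_refl 0, hs⟩ ⟨hs, le_refl s⟩
  have hexp : (0:ℝ) ≤ K - 2 * c * J + c ^ 2 * s := by
    have h0 : (0:ℝ) ≤ ∫ u in (0:ℝ)..s, (Real.sqrt (G u) - c) ^ 2 :=
      intervalIntegral.integral_nonneg hs (fun u _ => sq_nonneg _)
    have heq : ∫ u in (0:ℝ)..s, (Real.sqrt (G u) - c) ^ 2
        = ∫ u in (0:ℝ)..s, (G u - 2 * c * Real.sqrt (G u) + c ^ 2) := by
      apply intervalIntegral.integral_congr
      intro u hu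
      rw [Set.uIcc_of_le hs] at hu
      have : Real.sqrt (G u) ^ 2 = G u := Real.sq_sqrt (hG0 u hu)
      ring_nf
      nlinarith [this]
    rw [heq] at h0
    rw [intervalIntegral.integral_add (hGii.sub (hsqii.const_mul (2*c)))
      intervalIntegrable_const, intervalIntegral.integral_sub hGii (hsqii.const_mul (2*c)),
      intervalIntegral.integral_const_mul, intervalIntegral.integral_const] at h0
    simp only [smul_eq_mul, sub_zero] at h0
    linarith [h0]
  have hJK : J ^ 2 ≤ s * K := by
    have hcs : c * s = J := by rw [hc, div_mul_cancel₀ _ hs'.ne']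
    nlinarith [hexp, sq_nonneg c]
  have hJ0 : 0 ≤ J := intervalIntegral.integral_nonneg hs (fun u _ => Real.sqrt_nonneg _)
  calc J ≤ Real.sqrt (s * K) := by
        rw [show J = Real.sqrt (J ^ 2) from (Real.sqrt_sq hJ0).symm]
        exact Real.sqrt_le_sqrt hJK
    _ = Real.sqrt s * Real.sqrt K := Real.sqrt_mul hs K

lemma gronwall_aux (C t : ℝ) (hC : 0 ≤ C) (ht : 0 ≤ t) (ψ h : ℝ → ℝ)
    (hψ_int : Integrable ψ) (hψ0 : ∀ u, 0 ≤ ψ u)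
    (hh_cont : ContinuousOn h (Icc 0 t))
    (hh0 : ∀ u ∈ Icc (0:ℝ) t, 0 ≤ h u)
    (hineq : ∀ s ∈ Icc (0:ℝ) t, h s ≤ C + ∫ u in (0:ℝ)..s, ψ u * h u) :
    h t ≤ C * Real.exp (∫ u in (0:ℝ)..t, ψ u) := by
  set Φ : ℝ → ℝ := fun s => ∫ u in (0:ℝ)..s, ψ u with hΦdef
  have hψ_ii : ∀ a b : ℝ, IntervalIntegrable ψ volume a b := fun a b => hψ_int.intervalIntegrable
  have hΦ_cont : Continuous Φ := intervalIntegral.continuous_primitive hψ_ii 0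
  have hΦ_mono : Monotone Φ := by
    intro a b hab
    have hsub : Φ b - Φ a = ∫ u in a..b, ψ u :=
      intervalIntegral.integral_interval_sub_left (hψ_ii 0 b) (hψ_ii 0 a)
    nlinarith [intervalIntegral.integral_nonneg (μ := volume) (f := ψ) hab (fun u _ => hψ0 u), hsub]
  have hΦ0 : Φ 0 = 0 := intervalIntegral.integral_same
  obtain ⟨M, hM⟩ := (isCompact_Icc : IsCompact (Icc (0:ℝ) t)).exists_bound_of_continuousOn hh_cont
  have hM0 : 0 ≤ M := le_trans (norm_nonneg _) (hM 0 (left_mem_Icc.2 ht))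
  have hint : IntegrableOn (fun u => ψ u * h u) (Icc 0 t) := by
    refine Integrable.mono' ((hψ_int.restrict (s := Icc 0 t)).const_mul M) ?_ ?_
    · exact (hψ_int.aestronglyMeasurable.restrict).mul
        (hh_cont.aestronglyMeasurable measurableSet_Icc)
    · filter_upwards [ae_restrict_mem measurableSet_Icc] with u hu
      rw [norm_mul, Real.norm_of_nonneg (hψ0 u)]
      calc ψ u * ‖h u‖ ≤ ψ u * M := by
            exact mul_le_mul_of_nonneg_left (hM u hu) (hψ0 u)
        _ = M * ψ u := mul_comm _ _
  have hint' : ∀ a ∈ Icc (0:ℝ) t, ∀ b ∈ Icc (0:ℝ) t,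
      IntervalIntegrable (fun u => ψ u * h u) volume a b := fun a ha b hb => ii_sub hint ha hb
  have key : ∀ (δ : ℝ), 0 ≤ δ → δ < 1 → ∀ i : ℕ, ∀ s ∈ Icc (0:ℝ) t,
      Φ s ≤ i * δ → C + (∫ u in (0:ℝ)..s, ψ u * h u) ≤ C / (1 - δ) ^ i := by
    intro δ hδ0 hδ1 i
    induction i with
    | zero =>
      intro s hs hΦs
      have hΦs0 : Φ s = 0 := le_antisymm (by simpa using hΦs) (hΦ0 ▸ hΦ_mono hs.1)
      have : (∫ u in (0:ℝ)..s, ψ u * h u) ≤ ∫ u in (0:ℝ)..s, M * ψ u := by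
        apply intervalIntegral.integral_mono_on hs.1 (hint' 0 (left_mem_Icc.2 ht) s hs)
          ((hψ_ii 0 s).const_mul M)
        intro u hu
        have huT : u ∈ Icc (0:ℝ) t := ⟨hu.1, hu.2.trans hs.2⟩
        calc ψ u * h u ≤ ψ u * M :=
              mul_le_mul_of_nonneg_left ((le_abs_self _).trans (hM u huT)) (hψ0 u)
          _ = M * ψ u := mul_comm _ _
      rw [intervalIntegral.integral_const_mul] at this
      have : (∫ u in (0:ℝ)..s, ψ u * h u) ≤ 0 := by
        calc (∫ u in (0:ℝ)..s, ψ u * h u) ≤ M * Φ s := this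
          _ = 0 := by rw [hΦs0, mul_zero]
      simpa using by linarith
    | succ i ih =>
      intro s hs hΦs
      have h1δ : (0:ℝ) < 1 - δ := by linarith
      have hpowpos : (0:ℝ) < (1 - δ) ^ i := pow_pos h1δ i
      set U : Set ℝ := Icc 0 s ∩ {u | Φ u ≤ i * δ} with hUdef
      have hU0 : (0:ℝ) ∈ U := ⟨left_mem_Icc.2 hs.1, by simp [hΦ0]; positivity⟩
      have hUc : IsClosed U := isClosed_Icc.inter (isClosed_le hΦ_cont continuous_const)
      have hUbdd : BddAbove U := (bddAbove_Icc).mono inter_subset_left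
      set r := sSup U with hrdef
      have hrU : r ∈ U := hUc.csSup_mem ⟨0, hU0⟩ hUbdd
      have hr_mem : r ∈ Icc (0:ℝ) s := hrU.1
      have hrt : r ∈ Icc (0:ℝ) t := ⟨hr_mem.1, hr_mem.2.trans hs.2⟩
      have hΦr : Φ r ≤ i * δ := hrU.2
      have hK := ih r hrt hΦr
      rcases eq_or_lt_of_le hr_mem.2 with hrs | hrs
      · rw [← hrs]
        calc C + (∫ u in (0:ℝ)..r, ψ u * h u) ≤ C / (1 - δ) ^ i := hK
          _ ≤ C / (1 - δ) ^ (i + 1) := by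
              exact div_le_div_of_nonneg_left hC (pow_pos h1δ _)
                (pow_le_pow_of_le_one h1δ.le (by linarith) (Nat.le_succ i))
      · have hΦr_ge : (i : ℝ) * δ ≤ Φ r := by
          by_contra hlt
          push_neg at hlt
          obtain ⟨ε, hε, hball⟩ := Metric.isOpen_iff.mp
            (isOpen_lt hΦ_cont continuous_const) r hlt
          set u := min s (r + ε / 2) with hudef
          have hru : r < u := lt_min hrs (by linarith)
          have hus : u ≤ s := min_le_left _ _
          have huU : u ∈ U := by
            constructor
            · exact ⟨hr_mem.1.trans hru.le, hus⟩
            · show Φ u ≤ (i : ℝ) * δ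
              apply le_of_lt
              apply hball
              rw [Metric.mem_ball, Real.dist_eq, abs_of_nonneg (by linarith)]
              have : u ≤ r + ε / 2 := min_le_right _ _
              linarith
          exact absurd (le_csSup hUbdd huU) (not_le.2 hru)
        obtain ⟨u₀, hu₀mem, hu₀max⟩ := isCompact_Icc.exists_isMaxOn
          (nonempty_Icc.2 hr_mem.2) (hh_cont.mono (Icc_subset_Icc hr_mem.1 hs.2))
        set N := h u₀ with hNdef
        have hN0 : 0 ≤ N := hh0 u₀ ⟨hr_mem.1.trans hu₀mem.1, hu₀mem.2.trans hs.2⟩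
        have hstrip : ∀ u ∈ Icc r s, (∫ v in r..u, ψ v * h v) ≤ N * δ := by
          intro u hu
          have hut : u ∈ Icc (0:ℝ) t := ⟨hr_mem.1.trans hu.1, hu.2.trans hs.2⟩
          calc (∫ v in r..u, ψ v * h v) ≤ ∫ v in r..u, N * ψ v := by
                apply intervalIntegral.integral_mono_on hu.1 (hint' r hrt u hut)
                  ((hψ_ii r u).const_mul N)
                intro v hv
                have hvN : h v ≤ N := hu₀max ⟨hv.1, hv.2.trans hu.2⟩
                calc ψ v * h v ≤ ψ v * N := mul_le_mul_of_nonneg_left hvN (hψ0 v)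
                  _ = N * ψ v := mul_comm _ _
            _ = N * (Φ u - Φ r) := by
                rw [intervalIntegral.integral_const_mul,
                  intervalIntegral.integral_interval_sub_left (hψ_ii 0 u) (hψ_ii 0 r)]
            _ ≤ N * δ := by
                apply mul_le_mul_of_nonneg_left _ hN0
                have hΦu : Φ u ≤ (i + 1 : ℕ) * δ := (hΦ_mono hu.2).trans hΦs
                push_cast at hΦu ⊢
                linarith
        have hsplit : ∀ u ∈ Icc r s, (∫ v in (0:ℝ)..u, ψ v * h v)
            = (∫ v in (0:ℝ)..r, ψ v * h v) + ∫ v in r..u, ψ v * h v := by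
          intro u hu
          rw [intervalIntegral.integral_add_adjacent_intervals
            (hint' 0 (left_mem_Icc.2 ht) r hrt)
            (hint' r hrt u ⟨hr_mem.1.trans hu.1, hu.2.trans hs.2⟩)]
        have hNbound : N ≤ C / (1 - δ) ^ i / (1 - δ) := by
          have h1 : N ≤ C + ∫ v in (0:ℝ)..u₀, ψ v * h v :=
            hineq u₀ ⟨hr_mem.1.trans hu₀mem.1, hu₀mem.2.trans hs.2⟩
          rw [hsplit u₀ hu₀mem] at h1
          have h2 := hstrip u₀ hu₀mem
          have h3 : N ≤ C / (1 - δ) ^ i + N * δ := by linarith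
          rw [div_div, le_div_iff₀ (by positivity)]
          have h4 : (C / (1 - δ) ^ i) * (1 - δ) ^ i = C := div_mul_cancel₀ _ (ne_of_gt hpowpos)
          nlinarith [mul_le_mul_of_nonneg_right h3 hpowpos.le, h4]
        calc C + (∫ u in (0:ℝ)..s, ψ u * h u)
            = (C + (∫ u in (0:ℝ)..r, ψ u * h u)) + ∫ u in r..s, ψ u * h u := by
              rw [hsplit s (right_mem_Icc.2 hr_mem.2)]; ring
          _ ≤ C / (1 - δ) ^ i + N * δ := add_le_add hK (hstrip s (right_mem_Icc.2 hr_mem.2))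
          _ ≤ C / (1 - δ) ^ i + (C / (1 - δ) ^ i / (1 - δ)) * δ := by
              have := mul_le_mul_of_nonneg_right hNbound hδ0
              linarith
          _ = C / (1 - δ) ^ (i + 1) := by
              field_simp
              ring
  set B := Φ t with hBdef
  have hB0 : 0 ≤ B := hΦ0 ▸ hΦ_mono ht
  have main : ∀ n : ℕ, B < n → h t ≤ C / (1 - B / n) ^ n := by
    intro n hn
    have hnpos : (0:ℝ) < n := lt_of_le_of_lt hB0 hn
    have hδ0 : 0 ≤ B / n := div_nonneg hB0 hnpos.le
    have hδ1 : B / n < 1 := (div_lt_one hnpos).2 hn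
    have := key (B / n) hδ0 hδ1 n t (right_mem_Icc.2 ht)
      (by rw [mul_div_cancel₀ _ (ne_of_gt hnpos)] )
    exact (hineq t (right_mem_Icc.2 ht)).trans this
  have hlim : Tendsto (fun n : ℕ => C / (1 - B / n) ^ n) atTop
      (nhds (C * Real.exp B)) := by
    have h1 : Tendsto (fun n : ℕ => ((1:ℝ) + (-B) / n) ^ n) atTop (nhds (Real.exp (-B))) :=
      Real.tendsto_one_add_div_pow_exp (-B)
    have h2 : (fun n : ℕ => ((1:ℝ) - B / n) ^ n) = fun n : ℕ => ((1:ℝ) + (-B) / n) ^ n := by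
      funext n; rw [neg_div, ← sub_eq_add_neg]
    have h3 := Tendsto.div (tendsto_const_nhds (x := C)) (h2 ▸ h1) (Real.exp_ne_zero (-B))
    simpa [Real.exp_neg, div_eq_mul_inv, Pi.mul_def, Pi.inv_def] using h3
  apply ge_of_tendsto hlim
  filter_upwards [eventually_atTop.2 ⟨⌈B⌉₊ + 1, fun n hn => hn⟩] with n hn
  apply main
  calc B ≤ (⌈B⌉₊ : ℝ) := Nat.le_ceil B
    _ < (⌈B⌉₊ : ℝ) + 1 := by linarith
    _ ≤ n := by exact_mod_cast hn

/-- Lemma 2.5 (Gronwall-type inequality), estimate for `f`. -/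
theorem gronwall_type_f (T A : ℝ) (hT : 0 < T) (hA : 0 ≤ A)
    (f g G α β f' g' : ℝ → ℝ)
    (hf_nonneg : ∀ t ∈ Icc (0:ℝ) T, 0 ≤ f t)
    (hg_nonneg : ∀ t ∈ Icc (0:ℝ) T, 0 ≤ g t)
    (hG_nonneg : ∀ t ∈ Icc (0:ℝ) T, 0 ≤ G t)
    (hα_nonneg : ∀ t ∈ Icc (0:ℝ) T, 0 ≤ α t)
    (hβ_nonneg : ∀ t ∈ Icc (0:ℝ) T, 0 ≤ β t)
    (hf'_int : IntegrableOn f' (Icc 0 T))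
    (hg'_int : IntegrableOn g' (Icc 0 T))
    (hG_int : IntegrableOn G (Icc 0 T))
    (hα_int : IntegrableOn α (Icc 0 T))
    (hβ_int : IntegrableOn (fun t => t * β t) (Icc 0 T))
    (hf_ftc : ∀ t ∈ Icc (0:ℝ) T, f t = f 0 + ∫ s in (0:ℝ)..t, f' s)
    (hg_ftc : ∀ t ∈ Icc (0:ℝ) T, g t = g 0 + ∫ s in (0:ℝ)..t, g' s)
    (hf0 : f 0 = 0)
    (h1 : ∀ᵐ t ∂(volume.restrict (Ioo 0 T)), f' t ≤ A * Real.sqrt (G t))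
    (h2 : ∀ᵐ t ∂(volume.restrict (Ioo 0 T)),
      g' t + G t ≤ α t * g t + β t * (f t) ^ 2) :
    ∀ t ∈ Icc (0:ℝ) T,
      f t ≤ A * Real.sqrt (g 0) * Real.sqrt t *
        Real.exp ((1 / 2) * ∫ s in (0:ℝ)..t, (α s + A ^ 2 * s * β s)) := by
  intro t ht
  obtain ⟨ht0, htT⟩ := ht
  set I : ℝ → ℝ := fun s => ∫ u in (0:ℝ)..s, G u with hIdef
  set h : ℝ → ℝ := fun s => g s + I s with hhdef
  set ψ : ℝ → ℝ := (Icc (0:ℝ) T).indicator (fun s => α s + A ^ 2 * s * β s) with hψdef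
  -- continuity facts
  have hI_cont : ContinuousOn I (Icc 0 T) := by
    have h0 : IntegrableOn G (uIcc 0 T) := by rwa [uIcc_of_le hT.le]
    have := intervalIntegral.continuousOn_primitive_interval h0
    rwa [uIcc_of_le hT.le] at this
  have hg_cont : ContinuousOn g (Icc 0 T) := by
    have h0 : IntegrableOn g' (uIcc 0 T) := by rwa [uIcc_of_le hT.le]
    have hc := (continuousOn_const (c := g 0)).add
      ((intervalIntegral.continuousOn_primitive_interval h0).mono (by rw [uIcc_of_le hT.le]))
    exact hc.congr (fun s hs => hg_ftc s hs)
  have hf_cont : ContinuousOn f (Icc 0 T) := by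
    have h0 : IntegrableOn f' (uIcc 0 T) := by rwa [uIcc_of_le hT.le]
    have hc := (continuousOn_const (c := f 0)).add
      ((intervalIntegral.continuousOn_primitive_interval h0).mono (by rw [uIcc_of_le hT.le]))
    exact hc.congr (fun s hs => hf_ftc s hs)
  have hh_cont : ContinuousOn h (Icc 0 T) := hg_cont.add hI_cont
  -- nonnegativity facts
  have hI_nonneg : ∀ s ∈ Icc (0:ℝ) T, 0 ≤ I s := fun s hs =>
    intervalIntegral.integral_nonneg hs.1 (fun u hu => hG_nonneg u ⟨hu.1, hu.2.trans hs.2⟩)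
  have hh_nonneg : ∀ s ∈ Icc (0:ℝ) T, 0 ≤ h s := fun s hs =>
    add_nonneg (hg_nonneg s hs) (hI_nonneg s hs)
  have hg0 : 0 ≤ g 0 := hg_nonneg 0 (left_mem_Icc.2 hT.le)
  -- ψ facts
  have hφ_nonneg : ∀ s ∈ Icc (0:ℝ) T, 0 ≤ α s + A ^ 2 * s * β s := fun s hs =>
    add_nonneg (hα_nonneg s hs)
      (mul_nonneg (mul_nonneg (sq_nonneg A) hs.1) (hβ_nonneg s hs))
  have hψ0 : ∀ u, 0 ≤ ψ u := by
    intro u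
    by_cases hu : u ∈ Icc (0:ℝ) T
    · rw [hψdef, indicator_of_mem hu]; exact hφ_nonneg u hu
    · rw [hψdef, indicator_of_notMem hu]
  have hφ_int : IntegrableOn (fun s => α s + A ^ 2 * s * β s) (Icc 0 T) := by
    have h1' : IntegrableOn (fun s => A ^ 2 * (s * β s)) (Icc 0 T) := hβ_int.const_mul _
    have h2' : IntegrableOn (fun s => α s + A ^ 2 * (s * β s)) (Icc 0 T) := hα_int.add h1'
    have heq : (fun s => α s + A ^ 2 * (s * β s)) = fun s => α s + A ^ 2 * s * β s := by
      funext s; ring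
    rwa [heq] at h2'
  have hψ_int : Integrable ψ := hφ_int.integrable_indicator measurableSet_Icc
  -- key pointwise bound for f via Cauchy-Schwarz
  have hfsq : ∀ s ∈ Icc (0:ℝ) T, f s ≤ A * (Real.sqrt s * Real.sqrt (I s)) := by
    intro s hs
    have hIccsub : Icc (0:ℝ) s ⊆ Icc 0 T := Icc_subset_Icc_right hs.2
    have hIoosub : Ioo (0:ℝ) s ⊆ Icc 0 T := Ioo_subset_Icc_self.trans hIccsub
    have hfs : f s = ∫ u in (0:ℝ)..s, f' u := by rw [hf_ftc s hs, hf0, zero_add]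
    have hstep1 : (∫ u in (0:ℝ)..s, f' u) ≤ ∫ u in (0:ℝ)..s, A * Real.sqrt (G u) := by
      rw [intervalIntegral.integral_of_le hs.1, intervalIntegral.integral_of_le hs.1,
        integral_Ioc_eq_integral_Ioo, integral_Ioc_eq_integral_Ioo]
      apply integral_mono_ae
      · exact hf'_int.mono_set hIoosub
      · have hAs : IntegrableOn (fun u => A * Real.sqrt (G u)) (Icc 0 T) :=
          (sqrt_intOn hG_int).const_mul A
        exact hAs.mono_set hIoosub
      · exact ae_restrict_of_ae_restrict_of_subset (Ioo_subset_Ioo le_rfl hs.2) h1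
    have hstep2 : (∫ u in (0:ℝ)..s, A * Real.sqrt (G u))
        ≤ A * (Real.sqrt s * Real.sqrt (I s)) := by
      rw [intervalIntegral.integral_const_mul]
      exact mul_le_mul_of_nonneg_left
        (cs_sqrt hs.1 (hG_int.mono_set hIccsub) (fun u hu => hG_nonneg u (hIccsub hu))) hA
    rw [hfs]; exact hstep1.trans hstep2
  have hfsq2 : ∀ s ∈ Icc (0:ℝ) T, f s ^ 2 ≤ A ^ 2 * s * I s := by
    intro s hs
    have h2' : f s ^ 2 ≤ (A * (Real.sqrt s * Real.sqrt (I s))) ^ 2 :=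
      pow_le_pow_left₀ (hf_nonneg s hs) (hfsq s hs) 2
    calc f s ^ 2 ≤ (A * (Real.sqrt s * Real.sqrt (I s))) ^ 2 := h2'
      _ = A ^ 2 * s * I s := by
          rw [mul_pow, mul_pow, Real.sq_sqrt hs.1, Real.sq_sqrt (hI_nonneg s hs)]
          ring
  -- integrability of ψ * h
  obtain ⟨Mh, hMh⟩ := (isCompact_Icc : IsCompact (Icc (0:ℝ) T)).exists_bound_of_continuousOn hh_cont
  have hψh_int : IntegrableOn (fun u => ψ u * h u) (Icc 0 T) := by
    refine Integrable.mono' ((hψ_int.restrict (s := Icc 0 T)).const_mul Mh) ?_ ?_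
    · exact (hψ_int.aestronglyMeasurable.restrict).mul
        (hh_cont.aestronglyMeasurable measurableSet_Icc)
    · filter_upwards [ae_restrict_mem measurableSet_Icc] with u hu
      rw [norm_mul, Real.norm_of_nonneg (hψ0 u)]
      calc ψ u * ‖h u‖ ≤ ψ u * Mh := mul_le_mul_of_nonneg_left (hMh u hu) (hψ0 u)
        _ = Mh * ψ u := mul_comm _ _
  -- main integral inequality
  have hmain : ∀ s ∈ Icc (0:ℝ) t, h s ≤ g 0 + ∫ u in (0:ℝ)..s, ψ u * h u := by
    intro s hs
    have hsT : s ∈ Icc (0:ℝ) T := ⟨hs.1, hs.2.trans htT⟩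
    have hIoosub : Ioo (0:ℝ) s ⊆ Icc 0 T :=
      Ioo_subset_Icc_self.trans (Icc_subset_Icc_right hsT.2)
    have hrepr : h s = g 0 + ∫ u in (0:ℝ)..s, (g' u + G u) := by
      rw [intervalIntegral.integral_add
        (ii_sub hg'_int (left_mem_Icc.2 hT.le) hsT) (ii_sub hG_int (left_mem_Icc.2 hT.le) hsT)]
      rw [hhdef]
      simp only [hIdef]
      rw [hg_ftc s hsT]
      ring
    have hle : (∫ u in (0:ℝ)..s, (g' u + G u)) ≤ ∫ u in (0:ℝ)..s, ψ u * h u := by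
      rw [intervalIntegral.integral_of_le hs.1, intervalIntegral.integral_of_le hs.1,
        integral_Ioc_eq_integral_Ioo, integral_Ioc_eq_integral_Ioo]
      apply integral_mono_ae
      · have hgG : IntegrableOn (fun u => g' u + G u) (Icc 0 T) := hg'_int.add hG_int
        exact hgG.mono_set hIoosub
      · exact hψh_int.mono_set hIoosub
      · have hsub : Ioo (0:ℝ) s ⊆ Ioo 0 T := Ioo_subset_Ioo le_rfl (hs.2.trans htT)
        filter_upwards [ae_restrict_of_ae_restrict_of_subset hsub h2,
          ae_restrict_mem measurableSet_Ioo] with u hu2 humem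
        have huT : u ∈ Icc (0:ℝ) T := hIoosub humem
        have hψu : ψ u = α u + A ^ 2 * u * β u := by rw [hψdef, indicator_of_mem huT]
        have hIu : 0 ≤ I u := hI_nonneg u huT
        have hgu : 0 ≤ g u := hg_nonneg u huT
        have hfu2 : f u ^ 2 ≤ A ^ 2 * u * I u := hfsq2 u huT
        have hβu : 0 ≤ β u := hβ_nonneg u huT
        have hαu : 0 ≤ α u := hα_nonneg u huT
        have hu0 : 0 ≤ u := humem.1.le
        have hhu : h u = g u + I u := rfl
        calc g' u + G u ≤ α u * g u + β u * f u ^ 2 := hu2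
          _ ≤ ψ u * h u := by
              rw [hψu, hhu]
              have hb1 : β u * f u ^ 2 ≤ β u * (A ^ 2 * u * I u) :=
                mul_le_mul_of_nonneg_left hfu2 hβu
              nlinarith [mul_nonneg (mul_nonneg (mul_nonneg (sq_nonneg A) hu0) hβu) hgu,
                mul_nonneg hαu hIu]
    linarith [hrepr.le, hle, hrepr.ge]
  -- apply the Gronwall lemma
  have hgron := gronwall_aux (g 0) t hg0 ht0 ψ h hψ_int hψ0
    (hh_cont.mono (Icc_subset_Icc_right htT))
    (fun u hu => hh_nonneg u ⟨hu.1, hu.2.trans htT⟩) hmain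
  have hψφ : (∫ u in (0:ℝ)..t, ψ u) = ∫ u in (0:ℝ)..t, (α u + A ^ 2 * u * β u) := by
    apply intervalIntegral.integral_congr
    intro u hu
    rw [uIcc_of_le ht0] at hu
    rw [hψdef]
    exact indicator_of_mem (show u ∈ Icc (0:ℝ) T from ⟨hu.1, hu.2.trans htT⟩) _
  rw [hψφ] at hgron
  set Φt := ∫ s in (0:ℝ)..t, (α s + A ^ 2 * s * β s) with hΦtdef
  have hIt : I t ≤ g 0 * Real.exp Φt := by
    have hgt : 0 ≤ g t := hg_nonneg t ⟨ht0, htT⟩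
    have hht : h t = g t + I t := rfl
    linarith [hgron]
  have hfin := hfsq t ⟨ht0, htT⟩
  have hIt0 : 0 ≤ I t := hI_nonneg t ⟨ht0, htT⟩
  calc f t ≤ A * (Real.sqrt t * Real.sqrt (I t)) := hfin
    _ ≤ A * (Real.sqrt t * Real.sqrt (g 0 * Real.exp Φt)) := by
        exact mul_le_mul_of_nonneg_left
          (mul_le_mul_of_nonneg_left (Real.sqrt_le_sqrt hIt) (Real.sqrt_nonneg t)) hA
    _ = A * Real.sqrt (g 0) * Real.sqrt t * Real.exp ((1 / 2) * Φt) := by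
        rw [Real.sqrt_mul hg0, show (1 / 2 : ℝ) * Φt = Φt / 2 from by ring, Real.exp_half]
        ring
end

section
/- Under the hypotheses of the Gronwall-type lemma (f'(t) ≤ A√(G(t)), g'(t) + G(t) ≤ α(t)g(t) + β(t)f(t)², f(0) = 0, α ∈ L¹, tβ(t) ∈ L¹, all functions nonnegative, f and g absolutely continuous), if additionally g(0) = 0, then f ≡ 0, g ≡ 0, and G = 0 almost everywhere on (0,T). -/
open MeasureTheory Set

lemma gronwall_integral_zero (T : ℝ) (hT : 0 < T) (h u : ℝ → ℝ)
    (hh_int : IntegrableOn h (Icc 0 T))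
    (hu_cont : ContinuousOn u (Icc 0 T))
    (hu_nonneg : ∀ t ∈ Icc (0:ℝ) T, 0 ≤ u t)
    (hhu_int : IntegrableOn (fun s => h s * u s) (Icc 0 T))
    (hh_nonneg : ∀ t ∈ Icc (0:ℝ) T, 0 ≤ h t)
    (key : ∀ t ∈ Icc (0:ℝ) T, u t ≤ ∫ s in (0:ℝ)..t, h s * u s) :
    ∀ t ∈ Icc (0:ℝ) T, u t = 0 := by
  set S : Set ℝ := {t | t ∈ Icc (0:ℝ) T ∧ ∀ s ∈ Icc (0:ℝ) t, u s = 0} with hS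
  have subIcc : ∀ a b : ℝ, a ∈ Icc (0:ℝ) T → b ∈ Icc (0:ℝ) T → uIcc a b ⊆ Icc (0:ℝ) T := by
    intro a b ha hb
    exact uIcc_subset_Icc ha hb
  have hhu_ii : ∀ a b : ℝ, a ∈ Icc (0:ℝ) T → b ∈ Icc (0:ℝ) T →
      IntervalIntegrable (fun s => h s * u s) volume a b := fun a b ha hb =>
    (hhu_int.mono_set (subIcc a b ha hb)).intervalIntegrable
  have hh_ii : ∀ a b : ℝ, a ∈ Icc (0:ℝ) T → b ∈ Icc (0:ℝ) T →
      IntervalIntegrable h volume a b := fun a b ha hb =>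
    (hh_int.mono_set (subIcc a b ha hb)).intervalIntegrable
  have h0T : (0:ℝ) ∈ Icc (0:ℝ) T := ⟨le_rfl, hT.le⟩
  -- if u = 0 on [0,t), then u t = 0
  have hext : ∀ t ∈ Icc (0:ℝ) T, (∀ s, 0 ≤ s → s < t → u s = 0) → u t = 0 := by
    intro t ht hz
    have h0 : (∫ s in (0:ℝ)..t, h s * u s) = 0 := by
      rw [intervalIntegral.integral_of_le ht.1, integral_Ioc_eq_integral_Ioo,
        setIntegral_congr_fun measurableSet_Ioo (g := fun _ => (0:ℝ))]
      · simp
      · intro s hs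
        simp [hz s hs.1.le hs.2]
    have := key t ht
    rw [h0] at this
    exact le_antisymm this (hu_nonneg t ht)
  have h0S : (0:ℝ) ∈ S := by
    refine ⟨h0T, ?_⟩
    intro s hs
    have : s = 0 := le_antisymm hs.2 hs.1
    subst this
    exact hext 0 h0T (fun s hs hs' => absurd (hs.trans_lt hs') (lt_irrefl 0))
  have hSbdd : BddAbove S := ⟨T, fun x hx => hx.1.2⟩
  have hSne : S.Nonempty := ⟨0, h0S⟩
  set c := sSup S with hc
  have hc0 : 0 ≤ c := le_csSup hSbdd h0S
  have hcT : c ≤ T := csSup_le hSne (fun x hx => hx.1.2)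
  have hcIcc : c ∈ Icc (0:ℝ) T := ⟨hc0, hcT⟩
  have hzlt : ∀ s, 0 ≤ s → s < c → u s = 0 := by
    intro s hs0 hsc
    obtain ⟨x, hxS, hsx⟩ := exists_lt_of_lt_csSup hSne hsc
    exact hxS.2 s ⟨hs0, hsx.le⟩
  have hcS : c ∈ S := by
    refine ⟨hcIcc, ?_⟩
    intro s hs
    rcases lt_or_eq_of_le hs.2 with h' | h'
    · exact hzlt s hs.1 h'
    · rw [h']; exact hext c hcIcc hzlt
  have hcT' : c = T := by
    by_contra hne
    have hclt : c < T := lt_of_le_of_ne hcT hne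
    have Hcont : ContinuousOn (fun x => ∫ s in Ioc (0:ℝ) x, h s) (Icc 0 T) :=
      intervalIntegral.continuousOn_primitive hh_int
    have hHc : ContinuousWithinAt (fun x => ∫ s in Ioc (0:ℝ) x, h s) (Icc 0 T) c :=
      Hcont c hcIcc
    have hev : ∀ᶠ x in nhdsWithin c (Icc 0 T),
        |(∫ s in Ioc (0:ℝ) x, h s) - ∫ s in Ioc (0:ℝ) c, h s| < 1/2 := by
      have := hHc.tendsto (Metric.ball_mem_nhds _ (by norm_num : (0:ℝ) < 1/2))
      filter_upwards [this] with x hx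
      simpa [Real.dist_eq] using hx
    obtain ⟨ε, hε, hball⟩ := Metric.mem_nhdsWithin_iff.1 hev
    set δ := min (ε/2) (T - c) with hδdef
    have hδpos : 0 < δ := lt_min (by linarith) (by linarith)
    have hcδT : c + δ ≤ T := by
      have : δ ≤ T - c := min_le_right _ _
      linarith
    have hcδIcc : c + δ ∈ Icc (0:ℝ) T := ⟨by linarith, hcδT⟩
    have hHδ : (∫ s in c..(c+δ), h s) < 1/2 := by
      have hdist : dist (c + δ) c < ε := by
        rw [Real.dist_eq, abs_of_nonneg (by linarith : (0:ℝ) ≤ c + δ - c)]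
        have : δ ≤ ε/2 := min_le_left _ _
        linarith
      have h1 : |(∫ s in Ioc (0:ℝ) (c+δ), h s) - ∫ s in Ioc (0:ℝ) c, h s| < 1/2 :=
        hball ⟨Metric.mem_ball.2 hdist, hcδIcc⟩
      have hsplit := intervalIntegral.integral_add_adjacent_intervals
        (hh_ii 0 c h0T hcIcc) (hh_ii c (c+δ) hcIcc hcδIcc)
      rw [intervalIntegral.integral_of_le hc0, intervalIntegral.integral_of_le
        (by linarith : (0:ℝ) ≤ c + δ)] at hsplit
      have h2 : (∫ s in c..(c+δ), h s)
          = (∫ s in Ioc (0:ℝ) (c+δ), h s) - (∫ s in Ioc (0:ℝ) c, h s) := by linarith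
      rw [h2]
      calc (∫ s in Ioc (0:ℝ) (c+δ), h s) - (∫ s in Ioc (0:ℝ) c, h s)
          ≤ |(∫ s in Ioc (0:ℝ) (c+δ), h s) - ∫ s in Ioc (0:ℝ) c, h s| := le_abs_self _
        _ < 1/2 := h1
    have hKsub : Icc c (c+δ) ⊆ Icc (0:ℝ) T := Icc_subset_Icc hc0 hcδT
    have hKne : (Icc c (c+δ)).Nonempty := nonempty_Icc.2 (by linarith)
    obtain ⟨tstar, htsK, htsmax⟩ := isCompact_Icc.exists_isMaxOn hKne (hu_cont.mono hKsub)
    set M := u tstar with hM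
    have hMnonneg : 0 ≤ M := hu_nonneg _ (hKsub htsK)
    have hbound : ∀ t ∈ Icc c (c+δ), u t ≤ M * (1/2) := by
      intro t htK
      have htIcc : t ∈ Icc (0:ℝ) T := hKsub htK
      have h1 : u t ≤ ∫ s in (0:ℝ)..t, h s * u s := key t htIcc
      have hsplit : (∫ s in (0:ℝ)..t, h s * u s)
          = (∫ s in (0:ℝ)..c, h s * u s) + ∫ s in c..t, h s * u s :=
        (intervalIntegral.integral_add_adjacent_intervals
          (hhu_ii 0 c h0T hcIcc) (hhu_ii c t hcIcc htIcc)).symm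
      have hzero1 : (∫ s in (0:ℝ)..c, h s * u s) = 0 := by
        rw [intervalIntegral.integral_of_le hc0, integral_Ioc_eq_integral_Ioo,
          setIntegral_congr_fun measurableSet_Ioo (g := fun _ => (0:ℝ))]
        · simp
        · intro s hs; simp [hzlt s hs.1.le hs.2]
      have hmono : (∫ s in c..t, h s * u s) ≤ ∫ s in c..t, h s * M := by
        refine intervalIntegral.integral_mono_on htK.1 (hhu_ii c t hcIcc htIcc)
          ((hh_ii c t hcIcc htIcc).mul_const M) ?_
        intro s hs
        have hsK : s ∈ Icc c (c+δ) := ⟨hs.1, hs.2.trans htK.2⟩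
        exact mul_le_mul_of_nonneg_left (htsmax hsK) (hh_nonneg s (hKsub hsK))
      have hint2 : (∫ s in c..t, h s * M) = (∫ s in c..t, h s) * M :=
        intervalIntegral.integral_mul_const M h
      have hHmono : (∫ s in c..t, h s) ≤ ∫ s in c..(c+δ), h s := by
        refine intervalIntegral.integral_mono_interval le_rfl htK.1 htK.2 ?_
          (hh_ii c (c+δ) hcIcc hcδIcc)
        filter_upwards [ae_restrict_mem measurableSet_Ioc] with s hs
        exact hh_nonneg s ⟨hc0.trans hs.1.le, hs.2.trans hcδT⟩
      have hfinal : (∫ s in c..t, h s) * M ≤ M * (1/2) := by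
        rw [mul_comm]
        exact mul_le_mul_of_nonneg_left (hHmono.trans hHδ.le) hMnonneg
      linarith
    have hM0 : M ≤ 0 := by
      have := hbound tstar htsK
      linarith
    have hcδS : c + δ ∈ S := by
      refine ⟨hcδIcc, ?_⟩
      intro s hs
      rcases le_or_gt s c with h' | h'
      · exact hcS.2 s ⟨hs.1, h'⟩
      · have hsK : s ∈ Icc c (c+δ) := ⟨h'.le, hs.2⟩
        have := (hbound s hsK)
        have hnn := hu_nonneg s (hKsub hsK)
        nlinarith
    have := le_csSup hSbdd hcδS
    linarith
  intro t ht
  exact hcS.2 t ⟨ht.1, by rw [hcT']; exact ht.2⟩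

lemma quad_sqrt_aux (y k : ℝ) (hk : 0 < k) : y ≤ k/2 + 1/(2*k) * y^2 := by
  rw [← sub_nonneg]
  have e : k/2 + 1/(2*k)*y^2 - y = (y - k)^2/(2*k) := by
    field_simp
    ring
  rw [e]
  positivity

/-- Lemma 2.5 (Gronwall-type inequality), vanishing consequence (uniqueness). -/
theorem gronwall_type_zero (T A : ℝ) (hT : 0 < T) (hA : 0 ≤ A)
    (f g G α β f' g' : ℝ → ℝ)
    (hf_nonneg : ∀ t ∈ Icc (0:ℝ) T, 0 ≤ f t)
    (hg_nonneg : ∀ t ∈ Icc (0:ℝ) T, 0 ≤ g t)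
    (hG_nonneg : ∀ t ∈ Icc (0:ℝ) T, 0 ≤ G t)
    (hα_nonneg : ∀ t ∈ Icc (0:ℝ) T, 0 ≤ α t)
    (hβ_nonneg : ∀ t ∈ Icc (0:ℝ) T, 0 ≤ β t)
    (hf'_int : IntegrableOn f' (Icc 0 T))
    (hg'_int : IntegrableOn g' (Icc 0 T))
    (hG_int : IntegrableOn G (Icc 0 T))
    (hα_int : IntegrableOn α (Icc 0 T))
    (hβ_int : IntegrableOn (fun t => t * β t) (Icc 0 T))
    (hf_ftc : ∀ t ∈ Icc (0:ℝ) T, f t = f 0 + ∫ s in (0:ℝ)..t, f' s)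
    (hg_ftc : ∀ t ∈ Icc (0:ℝ) T, g t = g 0 + ∫ s in (0:ℝ)..t, g' s)
    (hf0 : f 0 = 0)
    (h1 : ∀ᵐ t ∂(volume.restrict (Ioo 0 T)), f' t ≤ A * Real.sqrt (G t))
    (h2 : ∀ᵐ t ∂(volume.restrict (Ioo 0 T)),
      g' t + G t ≤ α t * g t + β t * (f t) ^ 2)
    (hg0 : g 0 = 0) :
    (∀ t ∈ Icc (0:ℝ) T, f t = 0 ∧ g t = 0) ∧
      (∀ᵐ t ∂(volume.restrict (Ioo 0 T)), G t = 0) := by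
  have h0T : (0:ℝ) ∈ Icc (0:ℝ) T := ⟨le_rfl, hT.le⟩
  -- interval integrability helper
  have iiOf : ∀ (φ : ℝ → ℝ), IntegrableOn φ (Icc 0 T) → ∀ s ∈ Icc (0:ℝ) T,
      IntervalIntegrable φ volume 0 s := fun φ hφ s hs =>
    (hφ.mono_set (uIcc_subset_Icc h0T hs)).intervalIntegrable
  set IG : ℝ → ℝ := fun t => ∫ s in (0:ℝ)..t, G s with hIGdef
  set E : ℝ → ℝ := fun t => g t + IG t with hEdef
  -- nonnegativity of IG
  have hIG_nonneg : ∀ t ∈ Icc (0:ℝ) T, 0 ≤ IG t := by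
    intro t ht
    exact intervalIntegral.integral_nonneg ht.1
      (fun s hs => hG_nonneg s ⟨hs.1, hs.2.trans ht.2⟩)
  have hE_nonneg : ∀ t ∈ Icc (0:ℝ) T, 0 ≤ E t := fun t ht =>
    add_nonneg (hg_nonneg t ht) (hIG_nonneg t ht)
  -- continuity
  have hg_eq : ∀ t ∈ Icc (0:ℝ) T, g t = ∫ s in Ioc (0:ℝ) t, g' s := by
    intro t ht
    rw [hg_ftc t ht, hg0, intervalIntegral.integral_of_le ht.1, zero_add]
  have hgcont : ContinuousOn g (Icc 0 T) :=
    (intervalIntegral.continuousOn_primitive hg'_int).congr hg_eq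
  have hIG_eq : ∀ t ∈ Icc (0:ℝ) T, IG t = ∫ s in Ioc (0:ℝ) t, G s := by
    intro t ht
    simp only [hIGdef, intervalIntegral.integral_of_le ht.1]
  have hIGcont : ContinuousOn IG (Icc 0 T) :=
    (intervalIntegral.continuousOn_primitive hG_int).congr hIG_eq
  have hEcont : ContinuousOn E (Icc 0 T) := hgcont.add hIGcont
  -- sqrt G is integrable
  have hsqrtG_int : IntegrableOn (fun s => Real.sqrt (G s)) (Icc 0 T) := by
    refine Integrable.mono' ((integrable_const (1:ℝ)).add hG_int.abs)
      (Real.continuous_sqrt.comp_aestronglyMeasurable hG_int.aestronglyMeasurable) ?_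
    refine ae_of_all _ (fun s => ?_)
    have h1' : Real.sqrt (G s) ≤ Real.sqrt |G s| := Real.sqrt_le_sqrt (le_abs_self _)
    have h2' : Real.sqrt |G s| ≤ 1 + |G s| := by
      nlinarith [Real.sq_sqrt (abs_nonneg (G s)), Real.sqrt_nonneg |G s|,
        sq_nonneg (Real.sqrt |G s| - 1)]
    rw [Real.norm_eq_abs, abs_of_nonneg (Real.sqrt_nonneg _)]
    exact h1'.trans h2'
  -- pointwise bound on f
  have hfle : ∀ s ∈ Icc (0:ℝ) T, f s ≤ A * Real.sqrt (s * IG s) := by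
    intro s hs
    have hstep1 : f s ≤ A * ∫ τ in (0:ℝ)..s, Real.sqrt (G τ) := by
      rw [hf_ftc s hs, hf0, zero_add, ← intervalIntegral.integral_const_mul]
      refine intervalIntegral.integral_mono_ae_restrict hs.1 (iiOf f' hf'_int s hs)
        ((iiOf _ hsqrtG_int s hs).const_mul A) ?_
      rw [← Measure.restrict_congr_set Ioo_ae_eq_Icc]
      exact ae_mono (Measure.restrict_mono (Ioo_subset_Ioo le_rfl hs.2) le_rfl) h1
    have hstep2 : (∫ τ in (0:ℝ)..s, Real.sqrt (G τ)) ≤ Real.sqrt (s * IG s) := by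
      rcases eq_or_lt_of_le hs.1 with hs0 | hs0
      · rw [← hs0]
        simp [Real.sqrt_nonneg]
      have hI0 : 0 ≤ IG s := hIG_nonneg s hs
      rcases eq_or_lt_of_le hI0 with hI | hI
      · -- IG s = 0 : then G = 0 a.e. on (0,s), so integral of sqrt is 0
        have hGnn : 0 ≤ᵐ[volume.restrict (Ioc 0 s)] G :=
          ae_restrict_of_forall_mem measurableSet_Ioc
            (fun τ hτ => hG_nonneg τ ⟨hτ.1.le, hτ.2.trans hs.2⟩)
        have hGint' : IntegrableOn G (Ioc 0 s) :=
          hG_int.mono_set (fun τ hτ => ⟨hτ.1.le, hτ.2.trans hs.2⟩)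
        have hIG0 : (∫ τ in Ioc (0:ℝ) s, G τ) = 0 := by
          have heq := hIG_eq s hs
          linarith [heq]
        have hGae : G =ᵐ[volume.restrict (Ioc (0:ℝ) s)] 0 :=
          (integral_eq_zero_iff_of_nonneg_ae hGnn hGint').1 hIG0
        have hsq0 : (∫ τ in (0:ℝ)..s, Real.sqrt (G τ)) = 0 := by
          rw [intervalIntegral.integral_of_le hs.1]
          have hae : (fun τ => Real.sqrt (G τ))
              =ᵐ[volume.restrict (Ioc (0:ℝ) s)] (fun _ => (0:ℝ)) := by
            filter_upwards [hGae] with τ hτ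
            simp [hτ]
          rw [integral_congr_ae hae, integral_zero]
        rw [hsq0]
        exact Real.sqrt_nonneg _
      · -- IG s > 0
        set a := Real.sqrt (IG s) with ha
        set b := Real.sqrt s with hb
        have ha0 : 0 < a := Real.sqrt_pos.2 hI
        have hb0 : 0 < b := Real.sqrt_pos.2 hs0
        have ha2 : a ^ 2 = IG s := Real.sq_sqrt hI0
        have hb2 : b ^ 2 = s := Real.sq_sqrt hs.1
        set c := a / b with hc
        have hc0 : 0 < c := div_pos ha0 hb0
        have hpt : ∀ τ ∈ Icc (0:ℝ) s, Real.sqrt (G τ) ≤ c/2 + (1/(2*c)) * G τ := by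
          intro τ hτ
          have hGτ : 0 ≤ G τ := hG_nonneg τ ⟨hτ.1, hτ.2.trans hs.2⟩
          have hx : Real.sqrt (G τ) ^ 2 = G τ := Real.sq_sqrt hGτ
          have := quad_sqrt_aux (Real.sqrt (G τ)) c hc0
          rw [hx] at this
          exact this
        have hmono : (∫ τ in (0:ℝ)..s, Real.sqrt (G τ))
            ≤ ∫ τ in (0:ℝ)..s, (c/2 + (1/(2*c)) * G τ) := by
          refine intervalIntegral.integral_mono_on hs.1 (iiOf _ hsqrtG_int s hs)
            (intervalIntegrable_const.add ((iiOf G hG_int s hs).const_mul _)) hpt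
        have hval : (∫ τ in (0:ℝ)..s, (c/2 + (1/(2*c)) * G τ))
            = c/2 * s + (1/(2*c)) * IG s := by
          rw [intervalIntegral.integral_add intervalIntegrable_const
            ((iiOf G hG_int s hs).const_mul _), intervalIntegral.integral_const,
            intervalIntegral.integral_const_mul]
          simp [hIGdef]
          ring
        have heq : c/2 * s + (1/(2*c)) * IG s = Real.sqrt (s * IG s) := by
          have : Real.sqrt (s * IG s) = b * a := by
            rw [hb, ha, ← Real.sqrt_mul hs.1]
          rw [this, ← ha2, ← hb2, hc]
          field_simp
          ring
        rw [← heq]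
        exact hmono.trans_eq hval
    calc f s ≤ A * ∫ τ in (0:ℝ)..s, Real.sqrt (G τ) := hstep1
      _ ≤ A * Real.sqrt (s * IG s) := mul_le_mul_of_nonneg_left hstep2 hA
  have hfsq : ∀ s ∈ Icc (0:ℝ) T, f s ^ 2 ≤ A^2 * s * E s := by
    intro s hs
    have h1' : f s ^ 2 ≤ (A * Real.sqrt (s * IG s))^2 :=
      pow_le_pow_left₀ (hf_nonneg s hs) (hfle s hs) 2
    have h2' : (A * Real.sqrt (s * IG s))^2 = A^2 * (s * IG s) := by
      rw [mul_pow, Real.sq_sqrt (mul_nonneg hs.1 (hIG_nonneg s hs))]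
    have h3' : A^2 * (s * IG s) ≤ A^2 * (s * E s) := by
      refine mul_le_mul_of_nonneg_left ?_ (sq_nonneg A)
      refine mul_le_mul_of_nonneg_left ?_ hs.1
      have := hg_nonneg s hs
      simp only [hEdef]
      linarith
    calc f s ^ 2 ≤ (A * Real.sqrt (s * IG s))^2 := h1'
      _ = A^2 * (s * IG s) := h2'
      _ ≤ A^2 * (s * E s) := h3'
      _ = A^2 * s * E s := by ring
  -- the Gronwall kernel
  set h : ℝ → ℝ := fun s => α s + A^2 * (s * β s) with hhdef
  have hh_int : IntegrableOn h (Icc 0 T) := hα_int.add (hβ_int.const_mul (A^2))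
  have hh_nonneg : ∀ s ∈ Icc (0:ℝ) T, 0 ≤ h s := by
    intro s hs
    exact add_nonneg (hα_nonneg s hs)
      (mul_nonneg (sq_nonneg A) (mul_nonneg hs.1 (hβ_nonneg s hs)))
  -- boundedness of E and integrability of h * E
  obtain ⟨C, hC⟩ := isCompact_Icc.exists_bound_of_continuousOn hEcont
  have hE_meas : AEStronglyMeasurable E (volume.restrict (Icc (0:ℝ) T)) :=
    hEcont.aestronglyMeasurable measurableSet_Icc
  have hhE_int : IntegrableOn (fun s => h s * E s) (Icc 0 T) := by
    have : Integrable (fun s => E s * h s) (volume.restrict (Icc (0:ℝ) T)) := by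
      refine Integrable.bdd_mul (c := C) hh_int hE_meas ?_
      exact ae_restrict_of_forall_mem measurableSet_Icc (fun s hs => hC s hs)
    exact this.congr (ae_of_all _ (fun s => mul_comm (E s) (h s)))
  -- key integral inequality for E
  have hEkey : ∀ t ∈ Icc (0:ℝ) T, E t ≤ ∫ s in (0:ℝ)..t, h s * E s := by
    intro t ht
    have hEt : E t = ∫ s in (0:ℝ)..t, (g' s + G s) := by
      rw [intervalIntegral.integral_add (iiOf g' hg'_int t ht) (iiOf G hG_int t ht)]
      simp only [hEdef, hIGdef]
      rw [hg_ftc t ht, hg0, zero_add]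
    rw [hEt]
    refine intervalIntegral.integral_mono_ae_restrict ht.1
      ((iiOf g' hg'_int t ht).add (iiOf G hG_int t ht))
      ((hhE_int.mono_set (uIcc_subset_Icc h0T ht)).intervalIntegrable) ?_
    rw [← Measure.restrict_congr_set Ioo_ae_eq_Icc]
    have h2' : ∀ᵐ s ∂(volume.restrict (Ioo (0:ℝ) t)),
        g' s + G s ≤ α s * g s + β s * (f s) ^ 2 :=
      ae_mono (Measure.restrict_mono (Ioo_subset_Ioo le_rfl ht.2) le_rfl) h2
    filter_upwards [h2', ae_restrict_mem measurableSet_Ioo] with s hs hsmem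
    have hsIcc : s ∈ Icc (0:ℝ) T := ⟨hsmem.1.le, hsmem.2.le.trans ht.2⟩
    have hgE : g s ≤ E s := by
      have := hIG_nonneg s hsIcc
      simp only [hEdef]; linarith
    have hb1 : α s * g s ≤ α s * E s :=
      mul_le_mul_of_nonneg_left hgE (hα_nonneg s hsIcc)
    have hb2 : β s * (f s) ^ 2 ≤ β s * (A^2 * s * E s) :=
      mul_le_mul_of_nonneg_left (hfsq s hsIcc) (hβ_nonneg s hsIcc)
    calc g' s + G s ≤ α s * g s + β s * (f s) ^ 2 := hs
      _ ≤ α s * E s + β s * (A^2 * s * E s) := add_le_add hb1 hb2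
      _ = h s * E s := by simp only [hhdef]; ring
  -- apply Gronwall
  have hE0 : ∀ t ∈ Icc (0:ℝ) T, E t = 0 :=
    gronwall_integral_zero T hT h E hh_int hEcont hE_nonneg hhE_int hh_nonneg hEkey
  -- conclusions
  have hg_zero : ∀ t ∈ Icc (0:ℝ) T, g t = 0 := by
    intro t ht
    have h1' := hE0 t ht
    have h2' := hg_nonneg t ht
    have h3' := hIG_nonneg t ht
    simp only [hEdef] at h1'
    linarith
  have hIG_zero : ∀ t ∈ Icc (0:ℝ) T, IG t = 0 := by
    intro t ht
    have h1' := hE0 t ht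
    have := hg_zero t ht
    simp only [hEdef] at h1'
    linarith
  have hf_zero : ∀ t ∈ Icc (0:ℝ) T, f t = 0 := by
    intro t ht
    have h1' := hfle t ht
    rw [hIG_zero t ht, mul_zero, Real.sqrt_zero, mul_zero] at h1'
    exact le_antisymm h1' (hf_nonneg t ht)
  refine ⟨fun t ht => ⟨hf_zero t ht, hg_zero t ht⟩, ?_⟩
  -- G = 0 a.e.
  have hGnn : 0 ≤ᵐ[volume.restrict (Ioo (0:ℝ) T)] G :=
    ae_restrict_of_forall_mem measurableSet_Ioo
      (fun τ hτ => hG_nonneg τ ⟨hτ.1.le, hτ.2.le⟩)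
  have hGint' : IntegrableOn G (Ioo 0 T) := hG_int.mono_set Ioo_subset_Icc_self
  have hint0 : (∫ τ in Ioo (0:ℝ) T, G τ) = 0 := by
    have := hIG_zero T ⟨hT.le, le_rfl⟩
    simp only [hIGdef] at this
    rw [intervalIntegral.integral_of_le hT.le, integral_Ioc_eq_integral_Ioo] at this
    exact this
  have := (integral_eq_zero_iff_of_nonneg_ae hGnn hGint').1 hint0
  filter_upwards [this] with τ hτ
  exact hτ
end
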